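/- Let k₁, k₂ > 0 and t₀ ∈ ℝ. Let z : [t₀,∞) → [0, π/4) be continuous and let δ : [t₀,∞) → (−π, π) be differentiable and satisfy δ′(t) = (k₁ cos(2z(t)) / (2 N(δ(t)))) (tan(2z(t)) − 4k₂ tan(δ(t)/2)) for all t ≥ t₀, where N(δ) = √(1 + 16k₂² tan²(δ/2)). If δ(t₀) ∈ (0, π), then δ(t) ∈ [0, π) for all t ≥ t₀; that is, δ never becomes negative. (This is the forward-invariance property underlying the nonovershooting design: since y = −ρ sin δ, it guarantees that the unicycle's Cartesian ordinate satisfies y(t) ≤ 0 for all time, i.e. the curb is never violated.) -/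
import Mathlib


/-!
STATEMENT 19: Forward invariance of [0,π) for the nonovershooting polar-angle
dynamics: if z : [t₀,∞) → [0,π/4) is continuous, δ : [t₀,∞) → (−π,π) is
differentiable with δ′ = (k₁ cos(2z)/(2N(δ)))(tan(2z) − 4k₂ tan(δ/2)),
N(δ) = √(1 + 16k₂² tan²(δ/2)), and δ(t₀) ∈ (0,π), then δ(t) ∈ [0,π) for all
t ≥ t₀.
-/

noncomputable section

open Real

/-- N(δ) = √(1 + 16k₂² tan²(δ/2)) -/
def NN (k₂ δ : ℝ) : ℝ := Real.sqrt (1 + 16 * k₂ ^ 2 * Real.tan (δ / 2) ^ 2)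

lemma NN_pos (k₂ d : ℝ) : 0 < NN k₂ d := by
  unfold NN
  apply Real.sqrt_pos.mpr
  positivity

lemma deriv_sign (k₁ k₂ : ℝ) (hk₁ : 0 < k₁) (hk₂ : 0 < k₂)
    (zx dx : ℝ) (hz : zx ∈ Set.Ico 0 (Real.pi / 4))
    (hd1 : -Real.pi < dx) (hd2 : dx ≤ 0) :
    0 ≤ (k₁ * Real.cos (2 * zx) / (2 * NN k₂ dx))
          * (Real.tan (2 * zx) - 4 * k₂ * Real.tan (dx / 2)) := by
  have hπ := Real.pi_pos
  have hcos : 0 ≤ Real.cos (2 * zx) :=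
    le_of_lt (Real.cos_pos_of_mem_Ioo ⟨by linarith [hz.1], by linarith [hz.2]⟩)
  have htanz : 0 ≤ Real.tan (2 * zx) :=
    Real.tan_nonneg_of_nonneg_of_le_pi_div_two (by linarith [hz.1]) (by linarith [hz.2])
  have htand : Real.tan (dx / 2) ≤ 0 := by
    have h1 : 0 ≤ Real.tan (-(dx / 2)) :=
      Real.tan_nonneg_of_nonneg_of_le_pi_div_two (by linarith) (by linarith)
    rw [Real.tan_neg] at h1
    linarith
  have hN := NN_pos k₂ dx
  apply mul_nonneg
  · exact div_nonneg (mul_nonneg hk₁.le hcos) (by linarith)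
  · nlinarith

theorem nonovershooting_delta_invariance
    (k₁ k₂ : ℝ) (hk₁ : 0 < k₁) (hk₂ : 0 < k₂) (t₀ : ℝ)
    (z δ : ℝ → ℝ)
    (hzc : ContinuousOn z (Set.Ici t₀))
    (hzrange : ∀ t : ℝ, t₀ ≤ t → z t ∈ Set.Ico 0 (Real.pi / 4))
    (hδrange : ∀ t : ℝ, t₀ ≤ t → δ t ∈ Set.Ioo (-Real.pi) Real.pi)
    (hδ : ∀ t : ℝ, t₀ ≤ t →
      HasDerivAt δ
        ((k₁ * Real.cos (2 * z t) / (2 * NN k₂ (δ t)))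
          * (Real.tan (2 * z t) - 4 * k₂ * Real.tan (δ t / 2))) t)
    (h₀ : δ t₀ ∈ Set.Ioo 0 Real.pi) :
    ∀ t : ℝ, t₀ ≤ t → δ t ∈ Set.Ico 0 Real.pi := by
  intro t₁ ht
  refine ⟨?_, (hδrange t₁ ht).2⟩
  by_contra hneg
  push_neg at hneg
  -- continuity of δ on [t₀, t₁]
  have hδcont : ContinuousOn δ (Set.Icc t₀ t₁) := fun x hx =>
    ((hδ x hx.1).continuousAt).continuousWithinAt
  -- the zero set
  set S : Set ℝ := Set.Icc t₀ t₁ ∩ δ ⁻¹' {0} with hSdef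
  have hSsub : S ⊆ Set.Icc t₀ t₁ := Set.inter_subset_left
  have hSclosed : IsClosed S :=
    hδcont.preimage_isClosed_of_isClosed isClosed_Icc isClosed_singleton
  have hScomp : IsCompact S := isCompact_Icc.of_isClosed_subset hSclosed hSsub
  have hSne : S.Nonempty := by
    have h0 : (0 : ℝ) ∈ Set.Icc (δ t₁) (δ t₀) := ⟨hneg.le, h₀.1.le⟩
    obtain ⟨s₀, hs₀mem, hs₀⟩ := intermediate_value_Icc' ht hδcont h0
    exact ⟨s₀, hs₀mem, hs₀⟩
  set s := sSup S with hs
  have hsS : s ∈ S := hScomp.sSup_mem hSne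
  have hsIcc : s ∈ Set.Icc t₀ t₁ := hSsub hsS
  have hδs : δ s = 0 := hsS.2
  have hst₁ : s < t₁ := lt_of_le_of_ne hsIcc.2 (by
    intro h; rw [h] at hδs; linarith)
  -- on (s, t₁], δ < 0
  have hnegOn : ∀ x, s < x → x ≤ t₁ → δ x < 0 := by
    intro x hsx hxt
    have hxIcc : x ∈ Set.Icc t₀ t₁ := ⟨le_trans hsIcc.1 hsx.le, hxt⟩
    rcases lt_trichotomy (δ x) 0 with h | h | h
    · exact h
    · exact absurd (le_csSup hScomp.bddAbove ⟨hxIcc, h⟩) (not_le.mpr hsx)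
    · -- IVT between x and t₁ gives a zero above s
      have h0 : (0 : ℝ) ∈ Set.Icc (δ t₁) (δ x) := ⟨hneg.le, h.le⟩
      obtain ⟨y, hymem, hy⟩ := intermediate_value_Icc' hxt
        (hδcont.mono (Set.Icc_subset_Icc hxIcc.1 le_rfl)) h0
      have hyS : y ∈ S := ⟨⟨le_trans hxIcc.1 hymem.1, hymem.2⟩, hy⟩
      have : y ≤ s := le_csSup hScomp.bddAbove hyS
      linarith [hymem.1]
  -- δ is monotone on [s, t₁]
  have hmono : MonotoneOn δ (Set.Icc s t₁) := by
    apply monotoneOn_of_deriv_nonneg (convex_Icc s t₁)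
      (hδcont.mono (Set.Icc_subset_Icc hsIcc.1 le_rfl))
    · intro x hx
      rw [interior_Icc] at hx
      exact ((hδ x (le_trans hsIcc.1 hx.1.le)).differentiableAt).differentiableWithinAt
    · intro x hx
      rw [interior_Icc] at hx
      have hx₀ : t₀ ≤ x := le_trans hsIcc.1 hx.1.le
      rw [(hδ x hx₀).deriv]
      exact deriv_sign k₁ k₂ hk₁ hk₂ (z x) (δ x) (hzrange x hx₀)
        (hδrange x hx₀).1 (hnegOn x hx.1 hx.2.le).le
  have := hmono ⟨le_rfl, hst₁.le⟩ ⟨hst₁.le, le_rfl⟩ hst₁.le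
  rw [hδs] at this
  linarith

end
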